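/- Let μ > 0 and 0 < d < 1/2. Then for all r ∈ ℝ, φ̄(r; d) ≤ φ_cap(r), where φ_cap(r) = min{(1/2)r², μ}; moreover, equality φ̄(r; d) = φ_cap(r) holds if and only if |r| ≤ 2√(μd) or |r| ≥ √(μ/d), and the inequality is strict for 2√(μd) < |r| < √(μ/d). -/

import Mathlib

/-- The perspective-relaxation loss φ̄(r; d) for parameters μ > 0, d ∈ (0,1/2). -/
noncomputable def phiBar (mu d r : ℝ) : ℝ :=
  if |r| ≤ 2 * Real.sqrt (mu * d) then (1/2) * r^2
  else if |r| < Real.sqrt (mu / d) then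
    (-(d * r^2) + 2 * Real.sqrt (mu * d) * |r| - 2 * mu * d) / (1 - 2*d)
  else mu

/-- φ̄(·; d) underestimates the capped quadratic loss
φ_cap(r) = min{(1/2)r², μ}, with equality iff |r| ≤ 2√(μd) or |r| ≥ √(μ/d),
and strict inequality for 2√(μd) < |r| < √(μ/d). -/
theorem stmt_16 (mu d : ℝ) (hmu : 0 < mu) (hd0 : 0 < d) (hd : d < 1/2) :
    ∀ r : ℝ,
      phiBar mu d r ≤ min ((1/2) * r^2) mu ∧
      (phiBar mu d r = min ((1/2) * r^2) mu ↔
        |r| ≤ 2 * Real.sqrt (mu * d) ∨ Real.sqrt (mu / d) ≤ |r|) ∧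
      (2 * Real.sqrt (mu * d) < |r| → |r| < Real.sqrt (mu / d) →
        phiBar mu d r < min ((1/2) * r^2) mu) := by
  intro r
  have hd2 : (0:ℝ) < 1 - 2*d := by linarith
  set a := Real.sqrt (mu * d) with ha
  have ha2 : a^2 = mu * d := Real.sq_sqrt (by positivity)
  have hapos : 0 < a := Real.sqrt_pos.mpr (by positivity)
  have hb : Real.sqrt (mu / d) = a / d := by
    rw [ha, show mu / d = (mu * d) / d^2 by field_simp,
      Real.sqrt_div (by positivity), Real.sqrt_sq hd0.le]
  have hs0 : 0 ≤ |r| := abs_nonneg r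
  have hs2 : |r|^2 = r^2 := sq_abs r
  unfold phiBar
  rw [hb, ← ha]
  split_ifs with h1 h2
  · -- |r| ≤ 2a
    have hr2 : r^2 ≤ 4 * (mu * d) := by nlinarith [mul_self_le_mul_self hs0 h1]
    have hle : (1/2) * r^2 ≤ mu := by nlinarith
    have hmin : min ((1/2) * r^2) mu = (1/2) * r^2 := min_eq_left hle
    refine ⟨by rw [hmin], by rw [hmin]; simp [h1], fun hc _ => absurd h1 (not_le.mpr hc)⟩
  · -- middle region: 2a < |r| < a/d
    have hgt : 2 * a < |r| := not_le.mp h1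
    have hlt : d * |r| < a := by
      have := (lt_div_iff₀ hd0).mp h2; linarith
    have hp1 : 0 < (|r| - 2*a) * (|r| - 2*a) := mul_pos (by linarith) (by linarith)
    have hp2 : 0 < (a - d*|r|) * (a - d*|r|) := mul_pos (by linarith) (by linarith)
    have hlt1 : (-(d * r^2) + 2 * a * |r| - 2 * mu * d) / (1 - 2*d) < (1/2) * r^2 := by
      rw [div_lt_iff₀ hd2]; nlinarith
    have hdX : 0 < d * (mu + d * |r|^2 - 2 * a * |r|) := by nlinarith [hp2, ha2]
    have hX : 0 < mu + d * r^2 - 2 * a * |r| := by rw [← hs2]; nlinarith [hdX]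
    have hlt2 : (-(d * r^2) + 2 * a * |r| - 2 * mu * d) / (1 - 2*d) < mu := by
      rw [div_lt_iff₀ hd2]; linarith
    have hstrict := lt_min hlt1 hlt2
    exact ⟨hstrict.le, by
      constructor
      · intro heq; exact absurd heq hstrict.ne
      · rintro (h | h)
        · exact absurd h h1
        · exact absurd h (not_le.mpr h2), fun _ _ => hstrict⟩
  · -- |r| ≥ a/d
    have hge : a / d ≤ |r| := not_lt.mp h2
    have hda : a ≤ d * |r| := by
      rw [div_le_iff₀ hd0] at hge; linarith
    have hr2 : mu * d ≤ d^2 * r^2 := by nlinarith [mul_self_le_mul_self hapos.le hda]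
    have hle : mu ≤ (1/2) * r^2 := by nlinarith [sq_nonneg r]
    have hmin : min ((1/2) * r^2) mu = mu := min_eq_right hle
    refine ⟨by rw [hmin], by rw [hmin]; simp [hge], fun _ hc => absurd hc h2⟩
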